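/- arXiv:0710.1399 — 2 statements merged into one kernel-verified Lean document; each statement's English description precedes it below -/
import Mathlib

section
/- Let μ be a product probability measure on ℝ^m and g : ℝ^m → (0,∞) a bounded measurable coordinatewise nonincreasing function. Then μ stochastically dominates μ_g, where dμ_g = g dμ / ∫ g dμ. -/
open MeasureTheory

private lemma bdd_integrable {α : Type*} [MeasurableSpace α] (ρ : Measure α)
    [IsFiniteMeasure ρ] {f : α → ℝ} (hf : Measurable f) {C : ℝ} (h : ∀ x, |f x| ≤ C) :
    Integrable f ρ := by
  refine (integrable_const C).mono' hf.aestronglyMeasurable (ae_of_all _ fun x => ?_)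
  simpa [Real.norm_eq_abs] using h x

/-- 1D Chebyshev association inequality. -/
private lemma cheb (ρ : Measure ℝ) [IsProbabilityMeasure ρ] {F G : ℝ → ℝ}
    (hF : Measurable F) (hG : Measurable G) (hFm : Monotone F) (hGa : Antitone G)
    {CF CG : ℝ} (hFb : ∀ x, |F x| ≤ CF) (hGb : ∀ x, |G x| ≤ CG) :
    ∫ x, F x * G x ∂ρ ≤ (∫ x, F x ∂ρ) * (∫ x, G x ∂ρ) := by
  have key : ∀ x y, (F x - F y) * (G x - G y) ≤ 0 := by
    intro x y
    rcases le_total x y with h | h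
    · nlinarith [hFm h, hGa h]
    · nlinarith [hFm h, hGa h]
  have intF : Integrable F ρ := bdd_integrable ρ hF hFb
  have intG : Integrable G ρ := bdd_integrable ρ hG hGb
  have hFGb : ∀ x, |F x * G x| ≤ CF * CG := by
    intro x
    rw [abs_mul]
    exact mul_le_mul (hFb x) (hGb x) (abs_nonneg _) ((abs_nonneg _).trans (hFb x))
  have intFG : Integrable (fun x => F x * G x) ρ :=
    bdd_integrable ρ (hF.mul hG) hFGb
  set IF := ∫ x, F x ∂ρ with hIF
  set IG := ∫ x, G x ∂ρ with hIG
  set IFG := ∫ x, F x * G x ∂ρ with hIFG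
  have inner : ∀ x, ∫ y, (F x - F y) * (G x - G y) ∂ρ
      = F x * G x - F x * IG - G x * IF + IFG := by
    intro x
    have hfun : (fun y => (F x - F y) * (G x - G y))
        = fun y => (F x * G x - F x * G y) - (G x * F y - F y * G y) := by
      funext y; ring
    have i2 : Integrable (fun y => F x * G y) ρ := intG.const_mul _
    have i3 : Integrable (fun y => G x * F y) ρ := intF.const_mul _
    have i1 : Integrable (fun y => F x * G x - F x * G y) ρ := (integrable_const _).sub i2
    have i4 : Integrable (fun y => G x * F y - F y * G y) ρ := i3.sub intFG
    rw [hfun, integral_sub i1 i4,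
      integral_sub (integrable_const _) i2,
      integral_sub i3 intFG,
      integral_const, integral_const_mul, integral_const_mul, probReal_univ]
    simp [← hIF, ← hIG, ← hIFG]
    ring
  have hle : ∀ x, F x * G x - F x * IG - G x * IF + IFG ≤ 0 := by
    intro x
    rw [← inner x]
    exact integral_nonpos fun y => key x y
  have hbig : ∫ x, (F x * G x - F x * IG - G x * IF + IFG) ∂ρ ≤ 0 :=
    integral_nonpos fun x => hle x
  have j2 : Integrable (fun x => F x * IG) ρ := intF.mul_const _
  have j3 : Integrable (fun x => G x * IF) ρ := intG.mul_const _
  have j1 : Integrable (fun x => F x * G x - F x * IG) ρ := intFG.sub j2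
  have j0 : Integrable (fun x => F x * G x - F x * IG - G x * IF) ρ := j1.sub j3
  rw [integral_add j0 (integrable_const _),
    integral_sub j1 j3,
    integral_sub intFG j2, integral_mul_const, integral_mul_const,
    integral_const, probReal_univ] at hbig
  simp only [← hIF, ← hIG, ← hIFG, smul_eq_mul, ENNReal.toReal_one, one_mul] at hbig
  nlinarith [hbig]

private lemma cons_mono {m : ℕ} {x x' : ℝ} {y y' : Fin m → ℝ}
    (hx : x ≤ x') (hy : y ≤ y') :
    (Fin.cons x y : Fin (m + 1) → ℝ) ≤ Fin.cons x' y' := by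
  intro j
  induction j using Fin.cases with
  | zero => simpa using hx
  | succ i => simpa using hy i

private lemma measurable_cons {m : ℕ} (x : ℝ) :
    Measurable (fun y : Fin m → ℝ => (Fin.cons x y : Fin (m + 1) → ℝ)) := by
  rw [measurable_pi_iff]
  intro j
  induction j using Fin.cases with
  | zero => simpa using measurable_const
  | succ i => simpa using measurable_pi_apply i

/-- FKG-type inequality for product measures: monotone × antitone. -/
private lemma fkg_aux : ∀ (m : ℕ) (ν : Fin m → Measure ℝ),
    (∀ i, IsProbabilityMeasure (ν i)) →
    ∀ (CF CG : ℝ) (f g : (Fin m → ℝ) → ℝ), Measurable f → Measurable g →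
    Monotone f → Antitone g → (∀ x, |f x| ≤ CF) → (∀ x, |g x| ≤ CG) →
    ∫ x, f x * g x ∂(Measure.pi ν)
      ≤ (∫ x, f x ∂(Measure.pi ν)) * (∫ x, g x ∂(Measure.pi ν)) := by
  intro m
  induction m with
  | zero =>
    intro ν hν CF CG f g hf hg hfm hga hfb hgb
    haveI : ∀ i, IsProbabilityMeasure (ν i) := hν
    have hsub : ∀ (h : (Fin 0 → ℝ) → ℝ), h = fun _ => h (fun i => i.elim0) := by
      intro h; funext x; congr 1; exact Subsingleton.elim _ _
    rw [hsub f, hsub g]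
    simp [integral_const]
  | succ m IH =>
    intro ν hν CF CG f g hf hg hfm hga hfb hgb
    haveI : ∀ i, IsProbabilityMeasure (ν i) := hν
    set ν' : Fin m → Measure ℝ := fun j => ν ((0 : Fin (m + 1)).succAbove j) with hν'
    haveI hν'p : ∀ j, IsProbabilityMeasure (ν' j) := fun j => hν _
    set π : Measure (Fin m → ℝ) := Measure.pi ν' with hπ
    haveI : IsProbabilityMeasure π := by infer_instance
    set e := MeasurableEquiv.piFinSuccAbove (fun _ : Fin (m + 1) => ℝ) 0 with he
    have mp : MeasurePreserving e (Measure.pi ν) ((ν 0).prod π) :=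
      measurePreserving_piFinSuccAbove ν 0
    have hsymm : ∀ z : ℝ × (Fin m → ℝ), e.symm z = Fin.cons z.1 z.2 := by
      intro z
      simp [he, MeasurableEquiv.piFinSuccAbove, Fin.insertNthEquiv, Fin.insertNth_zero']
    -- transfer of integrals
    have transfer : ∀ (φ : (Fin (m + 1) → ℝ) → ℝ), Measurable φ → (∃ C, ∀ x, |φ x| ≤ C) →
        ∫ x, φ x ∂(Measure.pi ν) = ∫ x, ∫ y, φ (Fin.cons x y) ∂π ∂(ν 0) := by
      intro φ hφ ⟨C, hC⟩
      have hψ : Measurable (fun z : ℝ × (Fin m → ℝ) => φ (e.symm z)) :=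
        hφ.comp e.symm.measurable
      have hint : Integrable (fun z : ℝ × (Fin m → ℝ) => φ (e.symm z)) ((ν 0).prod π) :=
        bdd_integrable _ hψ (fun z => hC _)
      calc ∫ x, φ x ∂(Measure.pi ν) = ∫ x, φ (e.symm (e x)) ∂(Measure.pi ν) := by
            simp
        _ = ∫ z, φ (e.symm z) ∂((ν 0).prod π) :=
            mp.integral_comp e.measurableEmbedding (fun z => φ (e.symm z))
        _ = ∫ x, ∫ y, φ (e.symm (x, y)) ∂π ∂(ν 0) := integral_prod _ hint
        _ = ∫ x, ∫ y, φ (Fin.cons x y) ∂π ∂(ν 0) := by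
            simp_rw [hsymm]
    set F : ℝ → ℝ := fun x => ∫ y, f (Fin.cons x y) ∂π with hF
    set G : ℝ → ℝ := fun x => ∫ y, g (Fin.cons x y) ∂π with hG
    have hFmeas : Measurable F := by
      have : StronglyMeasurable (fun z : ℝ × (Fin m → ℝ) => f (e.symm z)) :=
        (hf.comp e.symm.measurable).stronglyMeasurable
      have := this.integral_prod_right' (ν := π)
      simp_rw [hsymm] at this
      exact this.measurable
    have hGmeas : Measurable G := by
      have : StronglyMeasurable (fun z : ℝ × (Fin m → ℝ) => g (e.symm z)) :=
        (hg.comp e.symm.measurable).stronglyMeasurable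
      have := this.integral_prod_right' (ν := π)
      simp_rw [hsymm] at this
      exact this.measurable
    have bnd : ∀ (φ : (Fin (m + 1) → ℝ) → ℝ) (C : ℝ), (∀ x, |φ x| ≤ C) →
        ∀ x : ℝ, |∫ y, φ (Fin.cons x y) ∂π| ≤ C := by
      intro φ C hC x
      have := norm_integral_le_of_norm_le_const (μ := π)
        (f := fun y => φ (Fin.cons x y)) (C := C) (ae_of_all _ fun y => by
          simpa [Real.norm_eq_abs] using hC _)
      simpa [Real.norm_eq_abs, measure_univ] using this
    have hFb : ∀ x, |F x| ≤ CF := bnd f CF hfb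
    have hGb : ∀ x, |G x| ≤ CG := bnd g CG hgb
    have hFmono : Monotone F := by
      intro x x' hx
      refine integral_mono (bdd_integrable _ (hf.comp (measurable_cons x)) (fun y => hfb _))
        (bdd_integrable _ (hf.comp (measurable_cons x')) (fun y => hfb _)) fun y => ?_
      exact hfm (cons_mono hx le_rfl)
    have hGanti : Antitone G := by
      intro x x' hx
      refine integral_mono (bdd_integrable _ (hg.comp (measurable_cons x')) (fun y => hgb _))
        (bdd_integrable _ (hg.comp (measurable_cons x)) (fun y => hgb _)) fun y => ?_
      exact hga (cons_mono hx le_rfl)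
    -- inner FKG via induction hypothesis
    have inner : ∀ x : ℝ, ∫ y, f (Fin.cons x y) * g (Fin.cons x y) ∂π ≤ F x * G x := by
      intro x
      exact IH ν' hν'p CF CG (fun y => f (Fin.cons x y)) (fun y => g (Fin.cons x y))
        (hf.comp (measurable_cons x)) (hg.comp (measurable_cons x))
        (fun y y' hy => hfm (cons_mono le_rfl hy))
        (fun y y' hy => hga (cons_mono le_rfl hy))
        (fun y => hfb _) (fun y => hgb _)
    have hFGb : ∀ x : Fin (m + 1) → ℝ, |f x * g x| ≤ CF * CG := by
      intro x
      rw [abs_mul]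
      exact mul_le_mul (hfb x) (hgb x) (abs_nonneg _) ((abs_nonneg _).trans (hfb x))
    have hinmeas : Measurable (fun x : ℝ => ∫ y, f (Fin.cons x y) * g (Fin.cons x y) ∂π) := by
      have : StronglyMeasurable (fun z : ℝ × (Fin m → ℝ) => f (e.symm z) * g (e.symm z)) :=
        ((hf.comp e.symm.measurable).mul (hg.comp e.symm.measurable)).stronglyMeasurable
      have := this.integral_prod_right' (ν := π)
      simp_rw [hsymm] at this
      exact this.measurable
    calc ∫ x, f x * g x ∂(Measure.pi ν)
        = ∫ x, ∫ y, f (Fin.cons x y) * g (Fin.cons x y) ∂π ∂(ν 0) :=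
          transfer _ (hf.mul hg) ⟨CF * CG, hFGb⟩
      _ ≤ ∫ x, F x * G x ∂(ν 0) := by
          refine integral_mono (bdd_integrable _ hinmeas
            (C := CF * CG) (fun x => bnd _ _ hFGb x))
            (bdd_integrable _ (hFmeas.mul hGmeas) (C := CF * CG) fun x => by
              rw [abs_mul]
              exact mul_le_mul (hFb x) (hGb x) (abs_nonneg _)
                ((abs_nonneg _).trans (hFb x))) inner
      _ ≤ (∫ x, F x ∂(ν 0)) * (∫ x, G x ∂(ν 0)) :=
          cheb (ν 0) hFmeas hGmeas hFmono hGanti hFb hGb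
      _ = (∫ x, f x ∂(Measure.pi ν)) * (∫ x, g x ∂(Measure.pi ν)) := by
          rw [transfer f hf ⟨CF, hfb⟩, transfer g hg ⟨CG, hgb⟩]

theorem stmt_10 (m : ℕ) (μ : Measure (Fin m → ℝ)) [IsProbabilityMeasure μ]
    (hprod : ∃ ν : Fin m → Measure ℝ,
      (∀ i, IsProbabilityMeasure (ν i)) ∧ μ = Measure.pi ν)
    (g : (Fin m → ℝ) → ℝ) (hgmeas : Measurable g)
    (hgpos : ∀ x, 0 < g x) (hgbd : ∃ C : ℝ, ∀ x, g x ≤ C)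
    (hganti : Antitone g)
    (μg : Measure (Fin m → ℝ))
    (hμg : μg = (ENNReal.ofReal (∫ x, g x ∂μ))⁻¹ •
      μ.withDensity (fun x => ENNReal.ofReal (g x))) :
    ∀ f : (Fin m → ℝ) → ℝ, Measurable f → (∃ C : ℝ, ∀ x, |f x| ≤ C) →
      Monotone f → ∫ x, f x ∂μg ≤ ∫ x, f x ∂μ := by
  intro f hfmeas hfbd hfmono
  obtain ⟨ν, hν, hμeq⟩ := hprod
  obtain ⟨Cg, hCg⟩ := hgbd
  obtain ⟨Cf, hCf⟩ := hfbd
  have hgabs : ∀ x, |g x| ≤ Cg := fun x => by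
    rw [abs_of_pos (hgpos x)]; exact hCg x
  have hgint : Integrable g μ := bdd_integrable μ hgmeas hgabs
  set I := ∫ x, g x ∂μ with hI
  have hIpos : 0 < I := by
    rw [hI, integral_pos_iff_support_of_nonneg (fun x => (hgpos x).le) hgint]
    have : Function.support g = Set.univ := by
      ext x; simp [Function.support, (hgpos x).ne']
    rw [this]
    simp
  -- compute the integral w.r.t. μg
  have hwd : ∫ x, f x ∂(μ.withDensity fun x => ENNReal.ofReal (g x)) = ∫ x, g x * f x ∂μ := by
    have : (fun x => ENNReal.ofReal (g x)) = fun x => ((g x).toNNReal : ENNReal) := by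
      funext x; simp [ENNReal.ofReal]
    rw [this, integral_withDensity_eq_integral_smul hgmeas.real_toNNReal f]
    congr 1
    funext x
    simp [NNReal.smul_def, Real.coe_toNNReal _ (hgpos x).le]
  have hμgint : ∫ x, f x ∂μg = I⁻¹ * ∫ x, g x * f x ∂μ := by
    have htr : ((ENNReal.ofReal I)⁻¹).toReal = I⁻¹ := by
      rw [ENNReal.toReal_inv, ENNReal.toReal_ofReal hIpos.le]
    rw [hμg, integral_smul_measure, hwd, htr, smul_eq_mul]
  have hfkg : ∫ x, f x * g x ∂μ ≤ (∫ x, f x ∂μ) * I := by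
    rw [hI, hμeq]
    exact fkg_aux m ν hν Cf Cg f g hfmeas hgmeas hfmono hganti hCf hgabs
  rw [hμgint]
  have : ∫ x, g x * f x ∂μ = ∫ x, f x * g x ∂μ := by
    congr 1; funext x; ring
  rw [this]
  rw [inv_mul_le_iff₀ hIpos, mul_comm]
  exact hfkg
end

section
/- Let ρ be an even probability measure on ℝ with ρ({0}) = 0, variance 1, and finite moment generating function. Define the tilted measure ρ[γ] by dρ[γ](x) = e^{γx} dρ(x)/∫ e^{γx'}dρ(x'). Then r_N := ∫_0^∞ (1 − e^{−4βx/√N})(1 − e^{−2βx/√N}) dρ[6β/√N](x) satisfies N · r_N → 4β² as N → ∞, for any fixed β > 0. -/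
open MeasureTheory Filter
open scoped NNReal ENNReal

/-- The exponential tilt of a measure `ρ` on `ℝ` by parameter `γ`:
`dρ[γ](x) = e^{γx} dρ(x) / ∫ e^{γx'} dρ(x')`. -/
noncomputable def expTilt (ρ : Measure ℝ) (γ : ℝ) : Measure ℝ :=
  (ENNReal.ofReal (∫ x, Real.exp (γ * x) ∂ρ))⁻¹ •
    ρ.withDensity (fun x => ENNReal.ofReal (Real.exp (γ * x)))

lemma tilt_integral (ρ : Measure ℝ) (γ : ℝ) (g : ℝ → ℝ)
    (hZ : 0 < ∫ x, Real.exp (γ * x) ∂ρ) :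
    ∫ x in Set.Ioi (0:ℝ), g x ∂(expTilt ρ γ)
      = (∫ x, Real.exp (γ * x) ∂ρ)⁻¹ * ∫ x in Set.Ioi (0:ℝ), Real.exp (γ * x) * g x ∂ρ := by
  have hmeas : Measurable (fun x : ℝ => (Real.exp (γ * x)).toNNReal) := by fun_prop
  rw [expTilt, Measure.restrict_smul, integral_smul_measure]
  rw [show (fun x : ℝ => ENNReal.ofReal (Real.exp (γ * x)))
      = (fun x : ℝ => ((Real.exp (γ * x)).toNNReal : ℝ≥0∞)) from rfl]
  rw [setIntegral_withDensity_eq_setIntegral_smul hmeas g measurableSet_Ioi]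
  rw [ENNReal.toReal_inv, ENNReal.toReal_ofReal hZ.le, smul_eq_mul]
  congr 1
  refine setIntegral_congr_fun measurableSet_Ioi fun x _ => ?_
  simp [NNReal.smul_def, Real.coe_toNNReal _ (Real.exp_nonneg _)]

lemma sym_integral (ρ : Measure ℝ) (heven : ρ.map (fun x => -x) = ρ)
    (f : ℝ → ℝ) (hf : AEStronglyMeasurable f ρ) :
    ∫ x, f x ∂ρ = ∫ x, f (-x) ∂ρ := by
  conv_lhs => rw [← heven]
  rw [integral_map measurable_neg.aemeasurable]
  rw [heven]; exact hf

lemma exp_add_ge (t : ℝ) : 2 ≤ Real.exp t + Real.exp (-t) := by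
  have h1 : Real.exp t * Real.exp (-t) = 1 := by rw [← Real.exp_add]; simp
  nlinarith [Real.exp_pos t, Real.exp_pos (-t), sq_nonneg (Real.exp t - 1),
    mul_nonneg (Real.exp_pos (-t)).le (sq_nonneg (Real.exp t - 1))]

lemma Z_ge_one (ρ : Measure ℝ) [IsProbabilityMeasure ρ]
    (heven : ρ.map (fun x => -x) = ρ)
    (hmgf : ∀ t : ℝ, Integrable (fun x => Real.exp (t * x)) ρ)
    (γ : ℝ) : 1 ≤ ∫ x, Real.exp (γ * x) ∂ρ := by
  have hneg : Integrable (fun x => Real.exp (-(γ * x))) ρ := by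
    simpa [neg_mul] using hmgf (-γ)
  have hsym : ∫ x, Real.exp (γ * x) ∂ρ = ∫ x, Real.exp (-(γ * x)) ∂ρ := by
    have := sym_integral ρ heven (fun x => Real.exp (γ * x)) (hmgf γ).1
    simpa [mul_neg] using this
  have h2 : (2:ℝ) ≤ ∫ x, (Real.exp (γ * x) + Real.exp (-(γ * x))) ∂ρ := by
    have : ∫ x, (2:ℝ) ∂ρ ≤ ∫ x, (Real.exp (γ * x) + Real.exp (-(γ * x))) ∂ρ :=
      integral_mono (integrable_const 2) ((hmgf γ).add hneg) fun x => exp_add_ge (γ * x)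
    simpa using this
  rw [integral_add (hmgf γ) hneg, ← hsym] at h2
  linarith

lemma slope_lim (c : ℝ) :
    Tendsto (fun s : ℝ => (1 - Real.exp (-(c * s))) / s) (nhdsWithin 0 {0}ᶜ) (nhds c) := by
  have hd : HasDerivAt (fun s : ℝ => 1 - Real.exp (-(c * s))) c 0 := by
    have h1 : HasDerivAt (fun s : ℝ => -(c * s)) (-c) 0 := by
      simpa [Pi.neg_def] using ((hasDerivAt_id (0:ℝ)).const_mul c).neg
    have h2 := h1.exp
    simpa using h2.const_sub 1
  rw [hasDerivAt_iff_tendsto_slope] at hd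
  refine hd.congr' ?_
  filter_upwards with s
  simp [slope_def_field, Real.exp_zero]

lemma sqrt_tend : Tendsto (fun N : ℕ => (Real.sqrt N)⁻¹) atTop (nhdsWithin 0 {0}ᶜ) := by
  rw [tendsto_nhdsWithin_iff]
  constructor
  · have h1 : Tendsto (fun N : ℕ => ((N:ℝ))⁻¹) atTop (nhds 0) :=
      tendsto_inv_atTop_nhds_zero_nat
    have h2 := (Real.continuous_sqrt.tendsto 0).comp h1
    simpa [Real.sqrt_inv, Function.comp_def] using h2
  · filter_upwards [eventually_ge_atTop 1] with N hN
    have : (1:ℝ) ≤ Real.sqrt N := Real.one_le_sqrt.2 (by exact_mod_cast hN)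
    simp only [Set.mem_compl_iff, Set.mem_singleton_iff]
    positivity

lemma ptwise (β x : ℝ) :
    Tendsto (fun N : ℕ => (N:ℝ) *
        (Real.exp (6*β/Real.sqrt N * x) *
          ((1 - Real.exp (-4*β*x/Real.sqrt N)) * (1 - Real.exp (-2*β*x/Real.sqrt N)))))
      atTop (nhds (8*β^2*x^2)) := by
  have hexp : Tendsto (fun s : ℝ => Real.exp (6*β*x*s)) (nhdsWithin 0 {0}ᶜ) (nhds 1) := by
    have : Continuous (fun s : ℝ => Real.exp (6*β*x*s)) := by fun_prop
    have h0 := this.tendsto 0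
    simpa using h0.mono_left nhdsWithin_le_nhds
  have hh : Tendsto (fun s : ℝ => Real.exp (6*β*x*s) *
      (((1 - Real.exp (-(4*β*x*s))) / s) * ((1 - Real.exp (-(2*β*x*s))) / s)))
      (nhdsWithin 0 {0}ᶜ) (nhds (1 * ((4*β*x) * (2*β*x)))) :=
    hexp.mul ((slope_lim (4*β*x)).mul (slope_lim (2*β*x)))
  have hcomp := hh.comp sqrt_tend
  have heq : (fun N : ℕ => (N:ℝ) *
        (Real.exp (6*β/Real.sqrt N * x) *
          ((1 - Real.exp (-4*β*x/Real.sqrt N)) * (1 - Real.exp (-2*β*x/Real.sqrt N)))))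
      =ᶠ[atTop] (fun N : ℕ => Real.exp (6*β*x*(Real.sqrt N)⁻¹) *
      (((1 - Real.exp (-(4*β*x*(Real.sqrt N)⁻¹))) / (Real.sqrt N)⁻¹) *
        ((1 - Real.exp (-(2*β*x*(Real.sqrt N)⁻¹))) / (Real.sqrt N)⁻¹))) := by
    filter_upwards [eventually_ge_atTop 1] with N hN
    have hu : (0:ℝ) < Real.sqrt N := by
      have : (1:ℝ) ≤ Real.sqrt N := Real.one_le_sqrt.2 (by exact_mod_cast hN)
      linarith
    have huu : Real.sqrt N * Real.sqrt N = (N:ℝ) := Real.mul_self_sqrt (Nat.cast_nonneg N)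
    have h1 : 6*β*x*(Real.sqrt N)⁻¹ = 6*β/Real.sqrt N*x := by ring
    have h2 : -(4*β*x*(Real.sqrt N)⁻¹) = -4*β*x/Real.sqrt N := by ring
    have h3 : -(2*β*x*(Real.sqrt N)⁻¹) = -2*β*x/Real.sqrt N := by ring
    rw [h1, h2, h3, div_eq_mul_inv _ (Real.sqrt N)⁻¹, div_eq_mul_inv _ (Real.sqrt N)⁻¹,
      inv_inv]
    generalize Real.sqrt (N:ℝ) = u at huu ⊢
    rw [← huu]
    ring
  have h := Tendsto.congr' heq.symm hcomp
  convert h using 2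
  ring

lemma sq_le_exp (x : ℝ) : x^2 ≤ 4*(Real.exp x + Real.exp (-x)) := by
  have h1 := Real.add_one_le_exp (|x|/2)
  have h2 : Real.exp (|x|/2) * Real.exp (|x|/2) = Real.exp |x| := by
    rw [← Real.exp_add]; ring_nf
  have h3 : Real.exp |x| ≤ Real.exp x + Real.exp (-x) := by
    rcases abs_cases x with ⟨h,_⟩|⟨h,_⟩ <;> rw [h] <;>
      nlinarith [Real.exp_pos x, Real.exp_pos (-x)]
  nlinarith [abs_nonneg x, sq_abs x, Real.exp_pos (|x|/2)]

theorem stmt_14 (ρ : Measure ℝ) [IsProbabilityMeasure ρ]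
    (heven : ρ.map (fun x => -x) = ρ)
    (hatom : ρ {0} = 0)
    (hvar : ∫ x, x ^ 2 ∂ρ = 1)
    (hmgf : ∀ t : ℝ, Integrable (fun x => Real.exp (t * x)) ρ)
    (β : ℝ) (hβ : 0 < β) :
    Tendsto
      (fun N : ℕ => (N : ℝ) *
        ∫ x in Set.Ioi (0 : ℝ),
          (1 - Real.exp (-4 * β * x / Real.sqrt N)) *
            (1 - Real.exp (-2 * β * x / Real.sqrt N))
          ∂(expTilt ρ (6 * β / Real.sqrt N)))
      atTop (nhds (4 * β ^ 2)) := by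
  -- integrability of the dominating function
  have hbd_int : Integrable (fun x : ℝ => 8*β^2*x^2 * Real.exp (6*β*x)) ρ := by
    have hsum : Integrable (fun x : ℝ =>
        32*β^2 * (Real.exp ((6*β+1)*x) + Real.exp ((6*β-1)*x))) ρ :=
      (((hmgf (6*β+1)).add (hmgf (6*β-1)))).const_mul (32*β^2)
    refine hsum.mono ((by fun_prop : Continuous (fun x : ℝ =>
      8*β^2*x^2 * Real.exp (6*β*x))).aestronglyMeasurable) ?_
    filter_upwards with x
    have h1 : Real.exp x * Real.exp (6*β*x) = Real.exp ((6*β+1)*x) := by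
      rw [← Real.exp_add]; ring_nf
    have h2 : Real.exp (-x) * Real.exp (6*β*x) = Real.exp ((6*β-1)*x) := by
      rw [← Real.exp_add]; ring_nf
    have h3 := sq_le_exp x
    have h4 : (0:ℝ) < Real.exp (6*β*x) := Real.exp_pos _
    rw [Real.norm_eq_abs, Real.norm_eq_abs]
    rw [abs_of_nonneg (by positivity), abs_of_nonneg (by positivity)]
    nlinarith [Real.exp_pos ((6*β+1)*x), Real.exp_pos ((6*β-1)*x), sq_nonneg x,
      mul_le_mul_of_nonneg_right h3 h4.le]
  -- the value of the limiting integral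
  have hsq_int : Integrable (fun x : ℝ => x^2) ρ := by
    refine (((hmgf 1).add (hmgf (-1))).const_mul 4).mono ((by fun_prop : Continuous
      (fun x : ℝ => x^2)).aestronglyMeasurable) ?_
    filter_upwards with x
    have h3 := sq_le_exp x
    simp only [Real.norm_eq_abs, Pi.add_apply]
    rw [abs_of_nonneg (sq_nonneg x), abs_of_nonneg
      (by positivity : (0:ℝ) ≤ 4 * (Real.exp (1 * x) + Real.exp (-1 * x)))]
    simpa [one_mul, neg_mul] using h3
  have hIoi : ∫ x in Set.Ioi (0:ℝ), x^2 ∂ρ = 1/2 := by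
    have hmeasf : AEStronglyMeasurable
        (fun x : ℝ => Set.indicator (Set.Ioi (0:ℝ)) (fun y => y^2) x) ρ :=
      ((measurable_id.pow_const 2).indicator measurableSet_Ioi).aestronglyMeasurable
    have hsym := sym_integral ρ heven _ hmeasf
    have hL : ∫ x, Set.indicator (Set.Ioi (0:ℝ)) (fun y => y^2) x ∂ρ
        = ∫ x in Set.Ioi (0:ℝ), x^2 ∂ρ := integral_indicator measurableSet_Ioi
    have hR : (fun x : ℝ => Set.indicator (Set.Ioi (0:ℝ)) (fun y => y^2) (-x))
        = fun x => Set.indicator (Set.Iio (0:ℝ)) (fun y => y^2) x := by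
      funext x
      simp [Set.indicator_apply, neg_pos, neg_sq]
    have h1 : ∫ x in Set.Ioi (0:ℝ), x^2 ∂ρ = ∫ x in Set.Iio (0:ℝ), x^2 ∂ρ := by
      rw [← hL, hsym, hR, integral_indicator measurableSet_Iio]
    have h2 : ρ.restrict (Set.Iic (0:ℝ)) = ρ.restrict (Set.Iio (0:ℝ)) :=
      Measure.restrict_congr_set (MeasureTheory.Iio_ae_eq_Iic' hatom).symm
    have h3 : ∫ x in Set.Ioi (0:ℝ), x^2 ∂ρ + ∫ x in Set.Iic (0:ℝ), x^2 ∂ρ = 1 := by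
      rw [show Set.Iic (0:ℝ) = (Set.Ioi (0:ℝ))ᶜ from Set.compl_Ioi.symm]
      rw [integral_add_compl measurableSet_Ioi hsq_int]
      exact hvar
    rw [h2, ← h1] at h3
    linarith
  -- the Z factor tends to 1
  have hsqrt0 : Tendsto (fun N : ℕ => (Real.sqrt N)⁻¹) atTop (nhds 0) :=
    sqrt_tend.mono_right nhdsWithin_le_nhds
  have hZlim : Tendsto (fun N : ℕ => ∫ x, Real.exp (6*β/Real.sqrt N * x) ∂ρ)
      atTop (nhds 1) := by
    have hDCT := tendsto_integral_filter_of_dominated_convergence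
      (μ := ρ) (F := fun (N : ℕ) (x : ℝ) => Real.exp (6*β/Real.sqrt N * x))
      (f := fun _ => (1:ℝ)) (l := atTop)
      (fun x => Real.exp (6*β*x) + Real.exp (-(6*β)*x))
      (Eventually.of_forall fun N => (by fun_prop : Continuous
        (fun x : ℝ => Real.exp (6*β/Real.sqrt N * x))).aestronglyMeasurable)
      ?_ ((hmgf (6*β)).add (by simpa [neg_mul] using hmgf (-(6*β)))) ?_
    · simpa using hDCT
    · filter_upwards [eventually_ge_atTop 1] with N hN
      filter_upwards with x
      have hu : (1:ℝ) ≤ Real.sqrt N := Real.one_le_sqrt.2 (by exact_mod_cast hN)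
      rw [Real.norm_eq_abs, abs_of_nonneg (Real.exp_nonneg _)]
      rcases le_total 0 x with hx | hx
      · have : 6*β/Real.sqrt N * x ≤ 6*β*x := by
          have h6 : 6*β/Real.sqrt N ≤ 6*β := by
            rw [div_le_iff₀ (by linarith)]; nlinarith
          nlinarith
        nlinarith [Real.exp_le_exp.2 this, Real.exp_pos (-(6*β)*x)]
      · have : 6*β/Real.sqrt N * x ≤ -(6*β)*x := by
          have h6 : 0 < 6*β/Real.sqrt N := by positivity
          nlinarith [div_le_iff₀ (show (0:ℝ) < Real.sqrt N by linarith) |>.2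
            (show 6*β ≤ 6*β*Real.sqrt N by nlinarith)]
        nlinarith [Real.exp_le_exp.2 this, Real.exp_pos (6*β*x)]
    · filter_upwards with x
      have harg : Tendsto (fun N : ℕ => 6*β/Real.sqrt N * x) atTop (nhds 0) := by
        have := (hsqrt0.const_mul (6*β)).mul_const x
        simpa [div_eq_mul_inv, mul_comm, mul_assoc, mul_left_comm] using this
      have := (Real.continuous_exp.tendsto 0).comp harg
      simpa [Function.comp_def] using this
  -- the main integral, dominated convergence
  have hmain : Tendsto (fun N : ℕ => ∫ x in Set.Ioi (0:ℝ),
      (N:ℝ) * (Real.exp (6*β/Real.sqrt N * x) *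
        ((1 - Real.exp (-4*β*x/Real.sqrt N)) * (1 - Real.exp (-2*β*x/Real.sqrt N)))) ∂ρ)
      atTop (nhds (∫ x in Set.Ioi (0:ℝ), 8*β^2*x^2 ∂ρ)) := by
    refine tendsto_integral_filter_of_dominated_convergence
      (fun x => 8*β^2*x^2 * Real.exp (6*β*x))
      (Eventually.of_forall fun N => ((by fun_prop : Continuous (fun x : ℝ =>
        (N:ℝ) * (Real.exp (6*β/Real.sqrt N * x) *
        ((1 - Real.exp (-4*β*x/Real.sqrt N)) * (1 - Real.exp (-2*β*x/Real.sqrt N)))))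
        ).aestronglyMeasurable)) ?_ (hbd_int.restrict) ?_
    · filter_upwards [eventually_ge_atTop 1] with N hN
      rw [ae_restrict_iff' measurableSet_Ioi]
      filter_upwards with x hx
      have hx0 : (0:ℝ) < x := hx
      have hu : (1:ℝ) ≤ Real.sqrt N := Real.one_le_sqrt.2 (by exact_mod_cast hN)
      have hu0 : (0:ℝ) < Real.sqrt N := by linarith
      have huu : Real.sqrt N * Real.sqrt N = (N:ℝ) := Real.mul_self_sqrt (Nat.cast_nonneg N)
      set u := Real.sqrt N with hudef
      have hA0 : 0 ≤ 1 - Real.exp (-4*β*x/u) := by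
        have : Real.exp (-4*β*x/u) ≤ 1 := Real.exp_le_one_iff.2 (by
          apply div_nonpos_of_nonpos_of_nonneg <;> nlinarith)
        linarith
      have hB0 : 0 ≤ 1 - Real.exp (-2*β*x/u) := by
        have : Real.exp (-2*β*x/u) ≤ 1 := Real.exp_le_one_iff.2 (by
          apply div_nonpos_of_nonpos_of_nonneg <;> nlinarith)
        linarith
      have hA1 : 1 - Real.exp (-4*β*x/u) ≤ 4*β*x/u := by
        have h := Real.add_one_le_exp (-4*β*x/u)
        rw [show -4*β*x/u = -(4*β*x/u) from by ring] at h ⊢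
        linarith
      have hB1 : 1 - Real.exp (-2*β*x/u) ≤ 2*β*x/u := by
        have h := Real.add_one_le_exp (-2*β*x/u)
        rw [show -2*β*x/u = -(2*β*x/u) from by ring] at h ⊢
        linarith
      have hE : Real.exp (6*β/u * x) ≤ Real.exp (6*β*x) := by
        apply Real.exp_le_exp.2
        rw [div_mul_eq_mul_div, div_le_iff₀ hu0]
        nlinarith [mul_nonneg (mul_nonneg (by linarith : (0:ℝ) ≤ 6*β) hx0.le)
          (by linarith : (0:ℝ) ≤ u - 1)]
      rw [Real.norm_eq_abs, abs_of_nonneg (by positivity)]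
      have hstep : (1 - Real.exp (-4*β*x/u)) * (1 - Real.exp (-2*β*x/u))
          ≤ (4*β*x/u) * (2*β*x/u) := by
        apply mul_le_mul hA1 hB1 hB0
        positivity
      have hprod : (N:ℝ) * ((4*β*x/u) * (2*β*x/u)) = 8*β^2*x^2 := by
        rw [← huu]; field_simp; ring
      calc (N:ℝ) * (Real.exp (6*β/u * x) *
            ((1 - Real.exp (-4*β*x/u)) * (1 - Real.exp (-2*β*x/u))))
          ≤ (N:ℝ) * (Real.exp (6*β*x) * ((4*β*x/u) * (2*β*x/u))) := by
            have hNn : (0:ℝ) ≤ (N:ℝ) := Nat.cast_nonneg N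
            apply mul_le_mul_of_nonneg_left _ hNn
            calc Real.exp (6*β/u * x) * ((1 - Real.exp (-4*β*x/u)) * (1 - Real.exp (-2*β*x/u)))
                ≤ Real.exp (6*β/u * x) * ((4*β*x/u) * (2*β*x/u)) := by
                  apply mul_le_mul_of_nonneg_left hstep (Real.exp_nonneg _)
              _ ≤ Real.exp (6*β*x) * ((4*β*x/u) * (2*β*x/u)) := by
                  apply mul_le_mul_of_nonneg_right hE (by positivity)
        _ = 8*β^2*x^2 * Real.exp (6*β*x) := by
            rw [show (N:ℝ) * (Real.exp (6*β*x) * ((4*β*x/u) * (2*β*x/u)))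
              = Real.exp (6*β*x) * ((N:ℝ) * ((4*β*x/u) * (2*β*x/u))) from by ring, hprod]
            ring
    · filter_upwards with x
      exact ptwise β x
  have hlimval : ∫ x in Set.Ioi (0:ℝ), 8*β^2*x^2 ∂ρ = 4*β^2 := by
    have : ∫ x in Set.Ioi (0:ℝ), 8*β^2*x^2 ∂ρ = 8*β^2 * ∫ x in Set.Ioi (0:ℝ), x^2 ∂ρ := by
      rw [← integral_const_mul]
    rw [this, hIoi]; ring
  rw [hlimval] at hmain
  -- identify the sequence
  have heqfun : ∀ N : ℕ, (N : ℝ) *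
        (∫ x in Set.Ioi (0 : ℝ),
          (1 - Real.exp (-4 * β * x / Real.sqrt N)) *
            (1 - Real.exp (-2 * β * x / Real.sqrt N))
          ∂(expTilt ρ (6 * β / Real.sqrt N)))
      = (∫ x, Real.exp (6*β/Real.sqrt N * x) ∂ρ)⁻¹ *
        ∫ x in Set.Ioi (0:ℝ),
          (N:ℝ) * (Real.exp (6*β/Real.sqrt N * x) *
            ((1 - Real.exp (-4*β*x/Real.sqrt N)) * (1 - Real.exp (-2*β*x/Real.sqrt N)))) ∂ρ := by
    intro N
    have hZ : 0 < ∫ x, Real.exp (6*β/Real.sqrt N * x) ∂ρ :=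
      lt_of_lt_of_le one_pos (Z_ge_one ρ heven hmgf _)
    rw [tilt_integral ρ (6*β/Real.sqrt N) _ hZ, integral_const_mul]
    ring
  have hfinal := (hZlim.inv₀ one_ne_zero).mul hmain
  rw [inv_one, one_mul] at hfinal
  exact Tendsto.congr (fun N => (heqfun N).symm) hfinal
end
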